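/- Let p ∈ ℕ and let 0 < β₁ < β₂. Suppose s₁ and s₂ both lie in the open interval (pπ/2, (p+1)π/2) and satisfy (β₁·sin s₁ + s₁·cos s₁)·(β₁·cos s₁ − s₁·sin s₁) = 0 and (β₂·sin s₂ + s₂·cos s₂)·(β₂·cos s₂ − s₂·sin s₂) = 0, respectively. Then s₁ < s₂. -/

import Mathlib

open Real

lemma eig_key (p : ℕ) (β s : ℝ) (hβ : 0 < β)
    (hs : s ∈ Set.Ioo ((p : ℝ) * π / 2) (((p : ℝ) + 1) * π / 2))
    (he : (β * Real.sin s + s * Real.cos s) *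
      (β * Real.cos s - s * Real.sin s) = 0) :
    s + arctan (s / β) = ((p : ℝ) + 1) * π / 2 := by
  have hπ := Real.pi_pos
  have hp0 : (0:ℝ) ≤ (p : ℝ) * π / 2 := by positivity
  have hspos : 0 < s := lt_of_le_of_lt hp0 hs.1
  set θ := arctan (s / β) with hθdef
  have hθpos : 0 < θ := by
    have := Real.arctan_strictMono (show (0:ℝ) < s / β by positivity)
    rw [Real.arctan_zero] at this
    exact this
  have hθlt : θ < π / 2 := Real.arctan_lt_pi_div_two _
  set r := Real.sqrt (β ^ 2 + s ^ 2) with hrdef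
  have hrpos : 0 < r := Real.sqrt_pos.mpr (by positivity)
  have hsqrt : Real.sqrt (1 + (s / β) ^ 2) = r / β := by
    rw [show (1 : ℝ) + (s / β) ^ 2 = (β ^ 2 + s ^ 2) / β ^ 2 by field_simp,
      Real.sqrt_div (by positivity), Real.sqrt_sq hβ.le]
  have hcos : Real.cos θ = β / r := by
    rw [hθdef, Real.cos_arctan, hsqrt]
    field_simp
  have hsin : Real.sin θ = s / r := by
    rw [hθdef, Real.sin_arctan, hsqrt]
    field_simp
  have hsin2 : Real.sin (2 * (s + θ)) = 0 := by
    rw [Real.sin_two_mul, Real.sin_add, Real.cos_add, hcos, hsin]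
    field_simp
    nlinarith [he]
  obtain ⟨n, hn⟩ := Real.sin_eq_zero_iff.mp hsin2
  have hlb : (p : ℝ) * π < (n : ℝ) * π := by rw [hn]; nlinarith [hs.1]
  have hub : (n : ℝ) * π < ((p : ℝ) + 2) * π := by rw [hn]; nlinarith [hs.2]
  have h1 : (p : ℤ) < n := by
    have := lt_of_mul_lt_mul_right hlb hπ.le
    exact_mod_cast this
  have h2 : n < (p : ℤ) + 2 := by
    have := lt_of_mul_lt_mul_right hub hπ.le
    exact_mod_cast this
  have hn' : n = (p : ℤ) + 1 := by omega
  have : (n : ℝ) = (p : ℝ) + 1 := by exact_mod_cast congrArg (Int.cast : ℤ → ℝ) hn'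
  rw [this] at hn
  linarith

theorem stmt_3 (p : ℕ) (β₁ β₂ s₁ s₂ : ℝ) (hβ₁ : 0 < β₁) (hβ : β₁ < β₂)
    (hs₁ : s₁ ∈ Set.Ioo ((p : ℝ) * π / 2) (((p : ℝ) + 1) * π / 2))
    (hs₂ : s₂ ∈ Set.Ioo ((p : ℝ) * π / 2) (((p : ℝ) + 1) * π / 2))
    (he₁ : (β₁ * Real.sin s₁ + s₁ * Real.cos s₁) *
      (β₁ * Real.cos s₁ - s₁ * Real.sin s₁) = 0)
    (he₂ : (β₂ * Real.sin s₂ + s₂ * Real.cos s₂) *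
      (β₂ * Real.cos s₂ - s₂ * Real.sin s₂) = 0) :
    s₁ < s₂ := by
  have hβ₂ : 0 < β₂ := hβ₁.trans hβ
  have h1 := eig_key p β₁ s₁ hβ₁ hs₁ he₁
  have h2 := eig_key p β₂ s₂ hβ₂ hs₂ he₂
  by_contra h
  push_neg at h
  have hπ := Real.pi_pos
  have hs₁pos : 0 < s₁ := lt_of_le_of_lt (by positivity) hs₁.1
  have hs₂pos : 0 < s₂ := lt_of_le_of_lt (by positivity) hs₂.1
  have hdiv : s₂ / β₂ < s₁ / β₁ := by
    rw [div_lt_div_iff₀ hβ₂ hβ₁]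
    nlinarith
  have harc : arctan (s₂ / β₂) < arctan (s₁ / β₁) := Real.arctan_strictMono hdiv
  linarith
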